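/- Let T > 0, let F be a reflection kernel with bounded parameters (γ, k), and let X ∈ D_T(L1). Then for all W¹, W² ∈ D_T(L1) and every n ≥ 1, ‖π^n_{X,F}(W¹) − π^n_{X,F}(W²)‖_{T,1} ≤ ‖F^(n)‖_op ‖W¹ − W²‖_{T,1}, where π^n_{X,F} denotes the n-fold iterate of π_{X,F}. Consequently, for every W ∈ D_T(L1), ‖π^n_{X,F}(W) − Ψ_F(X)‖_{T,1} → 0 as n → ∞. -/

import Mathlib

open MeasureTheory Set Filter
open scoped ENNReal NNReal

noncomputable section

/-- Operator norm of a kernel: `‖F‖_op = sup_{v ∈ [0,1]} ∫₀¹ |F(u,v)| du`. -/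
def kernelOpNorm (F : ℝ → ℝ → ℝ) : ℝ≥0∞ :=
  ⨆ v ∈ Icc (0:ℝ) 1, ∫⁻ u in Icc (0:ℝ) 1, ENNReal.ofReal |F u v|

/-- Composition of kernels. -/
def kernelComp (F G : ℝ → ℝ → ℝ) : ℝ → ℝ → ℝ :=
  fun u v => ∫ w in Icc (0:ℝ) 1, F u w * G w v

/-- `kernelIter F (n-1)` is the `n`-fold composition `F^(n)`; so `kernelIter F 0 = F^(1) = F`. -/
def kernelIter (F : ℝ → ℝ → ℝ) : ℕ → ℝ → ℝ → ℝ
  | 0 => F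
  | n + 1 => kernelComp F (kernelIter F n)

/-- Spatial action of a kernel on `f : [0,1] × [0,T] → ℝ`. -/
def kernelApply (F f : ℝ → ℝ → ℝ) : ℝ → ℝ → ℝ :=
  fun u t => ∫ v in Icc (0:ℝ) 1, F u v * f v t

/-- `sup_{0 ≤ t ≤ T} |f_u(t)|`, valued in `ℝ≥0∞`. -/
def pathSup (T : ℝ) (f : ℝ → ℝ → ℝ) (u : ℝ) : ℝ≥0∞ :=
  ⨆ t ∈ Icc (0:ℝ) T, ENNReal.ofReal |f u t|

/-- `‖f‖_{T,1} = ∫₀¹ sup_{0 ≤ t ≤ T} |f_u(t)| du`, valued in `ℝ≥0∞`. -/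
def TNorm (T : ℝ) (f : ℝ → ℝ → ℝ) : ℝ≥0∞ :=
  ∫⁻ u in Icc (0:ℝ) 1, pathSup T f u

/-- `f ∈ D_T(L1)`. -/
structure MemDT (T : ℝ) (f : ℝ → ℝ → ℝ) : Prop where
  rightCont : ∀ u ∈ Icc (0:ℝ) 1, ∀ t ∈ Ico (0:ℝ) T, ContinuousWithinAt (f u) (Ici t) t
  leftLim : ∀ u ∈ Icc (0:ℝ) 1, ∀ t ∈ Ioc (0:ℝ) T,
    ∃ L : ℝ, Tendsto (f u) (nhdsWithin t (Iio t)) (nhds L)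
  meas : ∀ t ∈ Icc (0:ℝ) T, Measurable fun u => f u t
  finite : TNorm T f ≠ ⊤

/-- `f ∈ D_T^↑(L1)`. -/
structure MemDTup (T : ℝ) (f : ℝ → ℝ → ℝ) : Prop where
  memDT : MemDT T f
  nonneg_zero : ∀ u ∈ Icc (0:ℝ) 1, 0 ≤ f u 0
  mono : ∀ u ∈ Icc (0:ℝ) 1, MonotoneOn (f u) (Icc (0:ℝ) T)

/-- `F` is a reflection kernel with bounded parameters `(γ, k)`. -/
structure IsReflKernel (F : ℝ → ℝ → ℝ) (γ : ℝ) (k : ℕ) : Prop where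
  meas : Measurable (Function.uncurry F)
  nonneg : ∀ u ∈ Icc (0:ℝ) 1, ∀ v ∈ Icc (0:ℝ) 1, 0 ≤ F u v
  opNorm_le_one : kernelOpNorm F ≤ 1
  gamma_mem : γ ∈ Set.Ioo (0:ℝ) 1
  k_pos : 1 ≤ k
  iter_le : kernelOpNorm (kernelIter F (k - 1)) ≤ ENNReal.ofReal γ

/-- The map `π_{X,F}`: `π_{X,F}(W)_u(t) = sup_{0 ≤ s ≤ t} max(−X_u(s) + (F W)_u(s), 0)`. -/
def piMap (X F W : ℝ → ℝ → ℝ) : ℝ → ℝ → ℝ :=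
  fun u t => ⨆ s : Icc (0:ℝ) t, max (-(X u s.1) + kernelApply F W u s.1) 0

end

noncomputable section

/-- `Y = Ψ_F(X)`: `Y` is the (unique) fixed point of `π_{X,F}` in `D_T^↑(L1)`. -/
def IsRegulator (T : ℝ) (X F Y : ℝ → ℝ → ℝ) : Prop :=
  MemDTup T Y ∧ ∀ u ∈ Icc (0:ℝ) 1, ∀ t ∈ Icc (0:ℝ) T, Y u t = piMap X F Y u t

end

noncomputable section
/-- `piIter X F W n` is the `n`-fold iterate `π^n_{X,F}(W)` (with `π^0 = id`). -/
def piIter (X F W : ℝ → ℝ → ℝ) : ℕ → ℝ → ℝ → ℝ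
  | 0 => W
  | n + 1 => piMap X F (piIter X F W n)
end


noncomputable section HelperProofs

lemma Real.ennnorm_eq_ofReal_abs (r : ℝ) : (‖r‖₊ : ℝ≥0∞) = ENNReal.ofReal |r| := by
  rw [← Real.enorm_eq_ofReal_abs]; rfl

/-- surjective enumeration of the rationals -/
def ratSeq : ℕ → ℚ := (exists_surjective_nat ℚ).choose

lemma ratSeq_surj : Function.Surjective ratSeq :=
  (exists_surjective_nat ℚ).choose_spec

/-- countable dense-from-the-right family in `[0,t]` -/
def dSeq (t : ℝ) (n : ℕ) : ℝ :=
  if ((ratSeq n : ℝ)) ∈ Ico (0:ℝ) t then ((ratSeq n : ℝ)) else t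

lemma dSeq_mem {t : ℝ} (ht : 0 ≤ t) (n : ℕ) : dSeq t n ∈ Icc (0:ℝ) t := by
  unfold dSeq; split_ifs with h
  · exact ⟨h.1, le_of_lt h.2⟩
  · exact ⟨ht, le_refl t⟩

lemma dSeq_top (t : ℝ) : ∃ n, dSeq t n = t := by
  obtain ⟨n, hn⟩ := ratSeq_surj (-1)
  refine ⟨n, ?_⟩
  unfold dSeq
  rw [hn]
  simp only [Rat.cast_neg, Rat.cast_one]
  rw [if_neg]
  rintro ⟨h1, -⟩; linarith

lemma dSeq_btwn {t s ε : ℝ} (hs : 0 ≤ s) (hst : s < t) (hε : 0 < ε) :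
    ∃ n, dSeq t n ∈ Ioo s (min (s + ε) t) := by
  have hlt : s < min (s + ε) t := lt_min (by linarith) hst
  obtain ⟨q, hq1, hq2⟩ := exists_rat_btwn hlt
  obtain ⟨n, hn⟩ := ratSeq_surj q
  refine ⟨n, ?_⟩
  have hq2' : (q:ℝ) < t := lt_of_lt_of_le hq2 (min_le_right _ _)
  have : ((ratSeq n : ℝ)) ∈ Ico (0:ℝ) t := by rw [hn]; exact ⟨le_of_lt (lt_of_le_of_lt hs hq1), hq2'⟩
  unfold dSeq
  rw [if_pos this, hn]
  exact ⟨hq1, hq2⟩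

lemma mem_closure_dSeq {h : ℝ → ℝ} {t : ℝ}
    (hrc : ∀ s ∈ Ico (0:ℝ) t, ContinuousWithinAt h (Ici s) s) :
    ∀ s ∈ Icc (0:ℝ) t, h s ∈ closure (range (fun n => h (dSeq t n))) := by
  intro s hs
  rcases eq_or_lt_of_le hs.2 with heq | hlt
  · obtain ⟨n, hn⟩ := dSeq_top t
    subst heq
    exact subset_closure ⟨n, by simp [hn]⟩
  · -- s < t, use right continuity
    have hrc' := hrc s ⟨hs.1, hlt⟩
    -- build a sequence from dSeq tending to s from the right
    have hseq : ∀ j : ℕ, ∃ n, dSeq t n ∈ Ioo s (min (s + (1:ℝ)/(j+1)) t) := fun j =>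
      dSeq_btwn hs.1 hlt (by positivity)
    choose nj hnj using hseq
    have htend : Tendsto (fun j => dSeq t (nj j)) atTop (nhds s) := by
      have h1 : Tendsto (fun j : ℕ => s + (1:ℝ)/(j+1)) atTop (nhds s) := by
        have := tendsto_one_div_add_atTop_nhds_zero_nat (𝕜 := ℝ)
        have h2 := this.const_add s
        simpa using h2
      refine tendsto_of_tendsto_of_tendsto_of_le_of_le (g := fun _ => s)
        tendsto_const_nhds h1 (fun j => le_of_lt (hnj j).1) ?_
      intro j
      exact le_trans (le_of_lt (hnj j).2) (min_le_left _ _)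
    have htend' : Tendsto (fun j => dSeq t (nj j)) atTop (nhdsWithin s (Ici s)) := by
      refine tendsto_nhdsWithin_of_tendsto_nhds_of_eventually_within _ htend ?_
      exact Eventually.of_forall (fun j => le_of_lt (hnj j).1)
    have : Tendsto (fun j => h (dSeq t (nj j))) atTop (nhds (h s)) :=
      hrc'.tendsto.comp htend'
    exact mem_closure_of_tendsto this (Eventually.of_forall (fun j => ⟨nj j, rfl⟩))

lemma sSup_eq_of_subset_closure {A B : Set ℝ} (hne : A.Nonempty) (hAB : A ⊆ B)
    (hBA : B ⊆ closure A) : sSup B = sSup A := by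
  by_cases hbdd : BddAbove A
  · have hBbdd : BddAbove B := by
      obtain ⟨c, hc⟩ := hbdd
      refine ⟨c, fun x hx => ?_⟩
      have : x ∈ closure A := hBA hx
      have hsub : closure A ⊆ Iic c := closure_minimal hc isClosed_Iic
      exact hsub this
    apply le_antisymm
    · apply csSup_le (hne.mono hAB)
      intro x hx
      have : x ∈ closure A := hBA hx
      have hsub : closure A ⊆ Iic (sSup A) :=
        closure_minimal (fun y hy => le_csSup hbdd hy) isClosed_Iic
      exact hsub this
    · exact csSup_le_csSup hBbdd hne hAB
  · have hBb : ¬ BddAbove B := fun hB => hbdd (hB.mono hAB)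
    rw [Real.sSup_of_not_bddAbove hBb, Real.sSup_of_not_bddAbove hbdd]

lemma iSup_eq_iSup_dSeq {h : ℝ → ℝ} {t : ℝ} (ht : 0 ≤ t)
    (hrc : ∀ s ∈ Ico (0:ℝ) t, ContinuousWithinAt h (Ici s) s) :
    (⨆ s : Icc (0:ℝ) t, h s.1) = ⨆ n, h (dSeq t n) := by
  have hA : (range (fun n => h (dSeq t n))).Nonempty := range_nonempty _
  have hAB : range (fun n => h (dSeq t n)) ⊆ h '' Icc (0:ℝ) t := by
    rintro x ⟨n, rfl⟩; exact ⟨dSeq t n, dSeq_mem ht n, rfl⟩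
  have hBA : h '' Icc (0:ℝ) t ⊆ closure (range (fun n => h (dSeq t n))) := by
    rintro x ⟨s, hs, rfl⟩; exact mem_closure_dSeq hrc s hs
  have h1 : (⨆ s : Icc (0:ℝ) t, h s.1) = sSup (h '' Icc (0:ℝ) t) := by
    rw [iSup]
    congr 1
    ext x
    simp [Set.mem_image]
  rw [h1, sSup_eq_of_subset_closure hA hAB hBA, iSup]

lemma ofReal_le_iSup_of_mem_closure {x : ℝ} {g : ℕ → ℝ}
    (hx : x ∈ closure (range g)) :
    ENNReal.ofReal |x| ≤ ⨆ n, ENNReal.ofReal |g n| := by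
  obtain ⟨u, hu, hutend⟩ := mem_closure_iff_seq_limit.1 hx
  have hcont : Tendsto (fun j => ENNReal.ofReal |u j|) atTop (nhds (ENNReal.ofReal |x|)) :=
    (ENNReal.continuous_ofReal.tendsto _).comp ((continuous_abs.tendsto _).comp hutend)
  refine le_of_tendsto hcont (Eventually.of_forall fun j => ?_)
  obtain ⟨n, hn⟩ := hu j
  rw [← hn]
  exact le_iSup (fun n => ENNReal.ofReal |g n|) n


lemma ofReal_iSup_le {ι : Sort*} [Nonempty ι] (f : ι → ℝ) :
    ENNReal.ofReal (⨆ i, f i) ≤ ⨆ i, ENNReal.ofReal (f i) := by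
  by_cases hb : BddAbove (range f)
  · rcases eq_top_or_lt_top (⨆ i, ENNReal.ofReal (f i)) with h | h
    · rw [h]; exact le_top
    · have hle : (⨆ i, f i) ≤ (⨆ i, ENNReal.ofReal (f i)).toReal := by
        refine ciSup_le fun i => ?_
        have h1 : f i ≤ (ENNReal.ofReal (f i)).toReal := by
          rcases le_or_gt 0 (f i) with h0 | h0
          · rw [ENNReal.toReal_ofReal h0]
          · exact h0.le.trans ENNReal.toReal_nonneg
        exact h1.trans (ENNReal.toReal_mono h.ne (le_iSup (fun j => ENNReal.ofReal (f j)) i))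
      calc ENNReal.ofReal (⨆ i, f i) ≤ ENNReal.ofReal (⨆ i, ENNReal.ofReal (f i)).toReal :=
            ENNReal.ofReal_le_ofReal hle
      _ = ⨆ i, ENNReal.ofReal (f i) := ENNReal.ofReal_toReal h.ne
  · rw [Real.iSup_of_not_bddAbove hb]
    simp

lemma ofReal_abs_iSup_sub_iSup_le {ι : Sort*} [Nonempty ι] (f g : ι → ℝ) :
    ENNReal.ofReal |(⨆ i, f i) - ⨆ i, g i| ≤ ⨆ i, ENNReal.ofReal |f i - g i| := by
  rcases eq_top_or_lt_top (⨆ i, ENNReal.ofReal |f i - g i|) with htop | hfin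
  · rw [htop]; exact le_top
  set r : ℝ := (⨆ i, ENNReal.ofReal |f i - g i|).toReal with hr
  have hr0 : 0 ≤ r := ENNReal.toReal_nonneg
  have hbnd : ∀ i, |f i - g i| ≤ r := by
    intro i
    have h1 : ENNReal.ofReal |f i - g i| ≤ ⨆ j, ENNReal.ofReal |f j - g j| :=
      le_iSup (fun j => ENNReal.ofReal |f j - g j|) i
    have := ENNReal.toReal_mono hfin.ne h1
    rwa [ENNReal.toReal_ofReal (abs_nonneg _)] at this
  have key : |(⨆ i, f i) - ⨆ i, g i| ≤ r := by
    by_cases hbf : BddAbove (range f)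
    · have hbg : BddAbove (range g) := by
        obtain ⟨c, hc⟩ := hbf
        refine ⟨c + r, ?_⟩
        rintro x ⟨i, rfl⟩
        have := hc (mem_range_self i : f i ∈ range f)
        have h2 := hbnd i
        have := abs_le.1 h2
        linarith [this.1, this.2]
      rw [abs_le]
      constructor
      · have h1 : (⨆ i, g i) ≤ (⨆ i, f i) + r := by
          refine ciSup_le fun i => ?_
          have := (abs_le.1 (hbnd i)).1
          calc g i ≤ f i + r := by linarith
          _ ≤ (⨆ i, f i) + r := by gcongr; exact le_ciSup hbf i
        linarith
      · have h1 : (⨆ i, f i) ≤ (⨆ i, g i) + r := by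
          refine ciSup_le fun i => ?_
          have := (abs_le.1 (hbnd i)).2
          calc f i ≤ g i + r := by linarith
          _ ≤ (⨆ i, g i) + r := by gcongr; exact le_ciSup hbg i
        linarith
    · have hbg : ¬ BddAbove (range g) := by
        intro hbg
        apply hbf
        obtain ⟨c, hc⟩ := hbg
        refine ⟨c + r, ?_⟩
        rintro x ⟨i, rfl⟩
        have := hc (mem_range_self i : g i ∈ range g)
        have h2 := (abs_le.1 (hbnd i)).2
        linarith
      rw [Real.iSup_of_not_bddAbove hbf, Real.iSup_of_not_bddAbove hbg]
      simpa using hr0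
  calc ENNReal.ofReal |(⨆ i, f i) - ⨆ i, g i| ≤ ENNReal.ofReal r := ENNReal.ofReal_le_ofReal key
  _ = ⨆ i, ENNReal.ofReal |f i - g i| := ENNReal.ofReal_toReal hfin.ne

lemma abs_integral_sub_le {μ : Measure ℝ} (a b : ℝ → ℝ)
    (hd : AEStronglyMeasurable (fun v => a v - b v) μ) :
    ENNReal.ofReal |(∫ v, a v ∂μ) - ∫ v, b v ∂μ| ≤ ∫⁻ v, ENNReal.ofReal |a v - b v| ∂μ := by
  have hnn : ∀ (c : ℝ → ℝ), (∫⁻ v, ENNReal.ofReal |c v| ∂μ) = ∫⁻ v, (‖c v‖₊ : ℝ≥0∞) ∂μ := by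
    intro c; refine lintegral_congr fun v => ?_
    rw [Real.ennnorm_eq_ofReal_abs]
  by_cases ha : Integrable a μ
  · by_cases hb : Integrable b μ
    · rw [← integral_sub ha hb, hnn, ← Real.ennnorm_eq_ofReal_abs]
      exact enorm_integral_le_lintegral_enorm _
    · -- b not integrable: RHS must be ⊤
      rcases eq_top_or_lt_top (∫⁻ v, ENNReal.ofReal |a v - b v| ∂μ) with h | h
      · rw [h]; exact le_top
      · exfalso
        apply hb
        have hab : Integrable (fun v => a v - b v) μ := by
          refine ⟨hd, ?_⟩
          rw [HasFiniteIntegral]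
          simpa only [Real.enorm_eq_ofReal_abs] using h
        have : b = fun v => a v - (a v - b v) := by ext v; ring
        rw [this]
        exact ha.sub hab
  · by_cases hb : Integrable b μ
    · rcases eq_top_or_lt_top (∫⁻ v, ENNReal.ofReal |a v - b v| ∂μ) with h | h
      · rw [h]; exact le_top
      · exfalso
        apply ha
        have hab : Integrable (fun v => a v - b v) μ := by
          refine ⟨hd, ?_⟩
          rw [HasFiniteIntegral]
          simpa only [Real.enorm_eq_ofReal_abs] using h
        have : a = fun v => b v + (a v - b v) := by ext v; ring
        rw [this]
        exact hb.add hab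
    · rw [integral_undef ha, integral_undef hb]
      simp


variable {F : ℝ → ℝ → ℝ}

/-- `ℝ≥0∞`-valued iterated kernel; `KK F n` corresponds to `kernelIter F n`. -/
def KK (F : ℝ → ℝ → ℝ) : ℕ → ℝ → ℝ → ℝ≥0∞
  | 0 => fun u v => (‖F u v‖₊ : ℝ≥0∞)
  | n + 1 => fun u v => ∫⁻ w in Icc (0:ℝ) 1, (‖F u w‖₊ : ℝ≥0∞) * KK F n w v

variable {F : ℝ → ℝ → ℝ}

lemma KK_meas (hF : Measurable (Function.uncurry F)) (n : ℕ) :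
    Measurable (Function.uncurry (KK F n)) := by
  induction n with
  | zero =>
    exact (measurable_coe_nnreal_ennreal.comp (measurable_nnnorm.comp hF))
  | succ n ih =>
    have h1 : Measurable (fun p : (ℝ × ℝ) × ℝ => (‖F p.1.1 p.2‖₊ : ℝ≥0∞) * KK F n p.2 p.1.2) := by
      apply Measurable.mul
      · exact measurable_coe_nnreal_ennreal.comp (measurable_nnnorm.comp
          (hF.comp (measurable_fst.fst.prodMk measurable_snd)))
      · exact ih.comp (measurable_snd.prodMk measurable_fst.snd)
    exact h1.lintegral_prod_right'

lemma opNorm_col (hop : kernelOpNorm F ≤ 1) {w : ℝ} (hw : w ∈ Icc (0:ℝ) 1) :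
    (∫⁻ u in Icc (0:ℝ) 1, (‖F u w‖₊ : ℝ≥0∞)) ≤ 1 := by
  refine le_trans ?_ hop
  rw [kernelOpNorm]
  refine le_trans (le_of_eq ?_) (le_iSup₂ (f := fun v _ => ∫⁻ u in Icc (0:ℝ) 1, ENNReal.ofReal |F u v|) w hw)
  exact lintegral_congr fun u => Real.ennnorm_eq_ofReal_abs _

lemma KK_col_le_one (hF : Measurable (Function.uncurry F)) (hop : kernelOpNorm F ≤ 1)
    (n : ℕ) {v : ℝ} (hv : v ∈ Icc (0:ℝ) 1) :
    (∫⁻ u in Icc (0:ℝ) 1, KK F n u v) ≤ 1 := by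
  induction n with
  | zero => exact opNorm_col hop hv
  | succ n ih =>
    have hswap : (∫⁻ u in Icc (0:ℝ) 1, ∫⁻ w in Icc (0:ℝ) 1, (‖F u w‖₊ : ℝ≥0∞) * KK F n w v)
        = ∫⁻ w in Icc (0:ℝ) 1, ∫⁻ u in Icc (0:ℝ) 1, (‖F u w‖₊ : ℝ≥0∞) * KK F n w v := by
      apply lintegral_lintegral_swap
      apply Measurable.aemeasurable
      apply Measurable.mul
      · exact measurable_coe_nnreal_ennreal.comp (measurable_nnnorm.comp hF)
      · exact (KK_meas hF n).comp (measurable_snd.prodMk measurable_const)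
    calc (∫⁻ u in Icc (0:ℝ) 1, KK F (n+1) u v)
        = ∫⁻ w in Icc (0:ℝ) 1, ∫⁻ u in Icc (0:ℝ) 1, (‖F u w‖₊ : ℝ≥0∞) * KK F n w v := by
          rw [← hswap]; rfl
      _ = ∫⁻ w in Icc (0:ℝ) 1, (∫⁻ u in Icc (0:ℝ) 1, (‖F u w‖₊ : ℝ≥0∞)) * KK F n w v := by
          refine lintegral_congr fun w => ?_
          exact lintegral_mul_const'' _ ((measurable_coe_nnreal_ennreal.comp
            (measurable_nnnorm.comp (hF.comp (measurable_id.prodMk measurable_const)))).aemeasurable)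
      _ ≤ ∫⁻ w in Icc (0:ℝ) 1, 1 * KK F n w v := by
          refine setLIntegral_mono' measurableSet_Icc fun w hw => ?_
          exact mul_le_mul_left (opNorm_col hop hw) _
      _ ≤ 1 := by simpa using ih


lemma KK_add (hF : Measurable (Function.uncurry F)) (m n : ℕ) (u v : ℝ) :
    KK F (m + n + 1) u v = ∫⁻ w in Icc (0:ℝ) 1, KK F m u w * KK F n w v := by
  induction m generalizing u with
  | zero => simp only [Nat.zero_add]; rfl
  | succ m ih =>
    have hswap : (∫⁻ w in Icc (0:ℝ) 1, ∫⁻ z in Icc (0:ℝ) 1,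
        (‖F u w‖₊ : ℝ≥0∞) * (KK F m w z * KK F n z v))
        = ∫⁻ z in Icc (0:ℝ) 1, ∫⁻ w in Icc (0:ℝ) 1,
        (‖F u w‖₊ : ℝ≥0∞) * (KK F m w z * KK F n z v) := by
      apply lintegral_lintegral_swap
      apply Measurable.aemeasurable
      refine Measurable.mul ?_ (Measurable.mul ?_ ?_)
      · exact measurable_coe_nnreal_ennreal.comp (measurable_nnnorm.comp
          (hF.comp (measurable_const.prodMk measurable_fst)))
      · exact (KK_meas hF m).comp (measurable_fst.prodMk measurable_snd)
      · exact (KK_meas hF n).comp (measurable_snd.prodMk measurable_const)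
    calc KK F (m + 1 + n + 1) u v
        = ∫⁻ w in Icc (0:ℝ) 1, (‖F u w‖₊ : ℝ≥0∞) * KK F (m + n + 1) w v := by
          have : m + 1 + n + 1 = (m + n + 1) + 1 := by omega
          rw [this]; rfl
      _ = ∫⁻ w in Icc (0:ℝ) 1, (‖F u w‖₊ : ℝ≥0∞) *
            ∫⁻ z in Icc (0:ℝ) 1, KK F m w z * KK F n z v := by
          exact lintegral_congr fun w => by rw [ih]
      _ = ∫⁻ w in Icc (0:ℝ) 1, ∫⁻ z in Icc (0:ℝ) 1,
            (‖F u w‖₊ : ℝ≥0∞) * (KK F m w z * KK F n z v) := by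
          refine lintegral_congr fun w => ?_
          have hm : AEMeasurable (fun z => KK F m w z * KK F n z v)
              (volume.restrict (Icc (0:ℝ) 1)) :=
            (((KK_meas hF m).comp measurable_prodMk_left).mul
              ((KK_meas hF n).comp measurable_prodMk_right)).aemeasurable
          rw [lintegral_const_mul'' _ hm]
      _ = ∫⁻ z in Icc (0:ℝ) 1, ∫⁻ w in Icc (0:ℝ) 1,
            (‖F u w‖₊ : ℝ≥0∞) * (KK F m w z * KK F n z v) := hswap
      _ = ∫⁻ z in Icc (0:ℝ) 1, KK F (m+1) u z * KK F n z v := by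
          refine lintegral_congr fun z => ?_
          have : (∫⁻ w in Icc (0:ℝ) 1, (‖F u w‖₊ : ℝ≥0∞) * (KK F m w z * KK F n z v))
              = (∫⁻ w in Icc (0:ℝ) 1, (‖F u w‖₊ : ℝ≥0∞) * KK F m w z) * KK F n z v := by
            have hm : AEMeasurable (fun w => (‖F u w‖₊ : ℝ≥0∞) * KK F m w z)
                (volume.restrict (Icc (0:ℝ) 1)) :=
              ((measurable_coe_nnreal_ennreal.comp (measurable_nnnorm.comp
                (hF.comp measurable_prodMk_left))).mul
                ((KK_meas hF m).comp measurable_prodMk_right)).aemeasurable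
            rw [← lintegral_mul_const'' _ hm]
            exact lintegral_congr fun w => by ring
          rw [this]; rfl

lemma kernelIter_meas (hF : Measurable (Function.uncurry F)) (n : ℕ) :
    Measurable (Function.uncurry (kernelIter F n)) := by
  induction n with
  | zero => exact hF
  | succ n ih =>
    have h1 : StronglyMeasurable (fun p : (ℝ × ℝ) × ℝ => F p.1.1 p.2 * kernelIter F n p.2 p.1.2) := by
      apply Measurable.stronglyMeasurable
      exact (hF.comp (measurable_fst.fst.prodMk measurable_snd)).mul
        (ih.comp (measurable_snd.prodMk measurable_fst.snd))
    exact h1.integral_prod_right'.measurable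

lemma kernelIter_nonneg (hnn : ∀ u ∈ Icc (0:ℝ) 1, ∀ v ∈ Icc (0:ℝ) 1, 0 ≤ F u v)
    (n : ℕ) : ∀ u ∈ Icc (0:ℝ) 1, ∀ v ∈ Icc (0:ℝ) 1, 0 ≤ kernelIter F n u v := by
  induction n with
  | zero => exact hnn
  | succ n ih =>
    intro u hu v hv
    refine setIntegral_nonneg measurableSet_Icc fun w hw => ?_
    exact mul_nonneg (hnn u hu w hw) (ih w hw v hv)

lemma KK_ae (hF : Measurable (Function.uncurry F)) (hop : kernelOpNorm F ≤ 1)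
    (hnn : ∀ u ∈ Icc (0:ℝ) 1, ∀ v ∈ Icc (0:ℝ) 1, 0 ≤ F u v)
    (n : ℕ) {v : ℝ} (hv : v ∈ Icc (0:ℝ) 1) :
    ∀ᵐ u ∂(volume.restrict (Icc (0:ℝ) 1)), KK F n u v = ENNReal.ofReal (kernelIter F n u v) := by
  induction n with
  | zero =>
    filter_upwards [ae_restrict_mem measurableSet_Icc] with u hu
    show (‖F u v‖₊ : ℝ≥0∞) = _
    rw [Real.ennnorm_eq_ofReal_abs, abs_of_nonneg (hnn u hu v hv)]
    rfl
  | succ n ih =>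
    have hfin : ∀ᵐ u ∂(volume.restrict (Icc (0:ℝ) 1)), KK F (n+1) u v < ⊤ := by
      apply ae_lt_top
      · exact (KK_meas hF (n+1)).comp (measurable_id.prodMk measurable_const)
      · exact ((KK_col_le_one hF hop (n+1) hv).trans_lt ENNReal.one_lt_top).ne
    filter_upwards [hfin, ae_restrict_mem measurableSet_Icc] with u hufin hu
    have hKrw : KK F (n+1) u v
        = ∫⁻ w in Icc (0:ℝ) 1, ENNReal.ofReal (F u w * kernelIter F n w v) := by
      show (∫⁻ w in Icc (0:ℝ) 1, (‖F u w‖₊ : ℝ≥0∞) * KK F n w v) = _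
      refine lintegral_congr_ae ?_
      filter_upwards [ih, ae_restrict_mem measurableSet_Icc] with w hw hwI
      rw [hw, Real.ennnorm_eq_ofReal_abs, abs_of_nonneg (hnn u hu w hwI),
        ← ENNReal.ofReal_mul (hnn u hu w hwI)]
    have hmeas : AEStronglyMeasurable (fun w => F u w * kernelIter F n w v)
        (volume.restrict (Icc (0:ℝ) 1)) := by
      apply Measurable.aestronglyMeasurable
      exact (hF.comp (measurable_const.prodMk measurable_id)).mul
        ((kernelIter_meas hF n).comp (measurable_id.prodMk measurable_const))
    have hnn' : 0 ≤ᵐ[volume.restrict (Icc (0:ℝ) 1)] fun w => F u w * kernelIter F n w v := by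
      filter_upwards [ae_restrict_mem measurableSet_Icc] with w hwI
      exact mul_nonneg (hnn u hu w hwI) (kernelIter_nonneg hnn n w hwI v hv)
    have hint : (∫ w in Icc (0:ℝ) 1, F u w * kernelIter F n w v)
        = (∫⁻ w in Icc (0:ℝ) 1, ENNReal.ofReal (F u w * kernelIter F n w v)).toReal :=
      integral_eq_lintegral_of_nonneg_ae hnn' hmeas
    show KK F (n+1) u v = ENNReal.ofReal (kernelComp F (kernelIter F n) u v)
    rw [kernelComp, hint, ← hKrw, ENNReal.ofReal_toReal hufin.ne]

lemma KK_col_le_opNorm (hF : Measurable (Function.uncurry F)) (hop : kernelOpNorm F ≤ 1)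
    (hnn : ∀ u ∈ Icc (0:ℝ) 1, ∀ v ∈ Icc (0:ℝ) 1, 0 ≤ F u v)
    (n : ℕ) {v : ℝ} (hv : v ∈ Icc (0:ℝ) 1) :
    (∫⁻ u in Icc (0:ℝ) 1, KK F n u v) ≤ kernelOpNorm (kernelIter F n) := by
  have h1 : (∫⁻ u in Icc (0:ℝ) 1, KK F n u v)
      = ∫⁻ u in Icc (0:ℝ) 1, ENNReal.ofReal |kernelIter F n u v| := by
    refine lintegral_congr_ae ?_
    filter_upwards [KK_ae hF hop hnn n hv, ae_restrict_mem measurableSet_Icc] with u hu huI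
    rw [hu, abs_of_nonneg (kernelIter_nonneg hnn n u huI v hv)]
  rw [h1, kernelOpNorm]
  exact le_iSup₂ (f := fun w (_ : w ∈ Icc (0:ℝ) 1) =>
    ∫⁻ u in Icc (0:ℝ) 1, ENNReal.ofReal |kernelIter F n u w|) v hv

/-- supremum over columns of `KK F n` -/
def cB (F : ℝ → ℝ → ℝ) (n : ℕ) : ℝ≥0∞ :=
  ⨆ v ∈ Icc (0:ℝ) 1, ∫⁻ u in Icc (0:ℝ) 1, KK F n u v

lemma cB_le_one (hF : Measurable (Function.uncurry F)) (hop : kernelOpNorm F ≤ 1) (n : ℕ) :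
    cB F n ≤ 1 :=
  iSup₂_le fun _ hv => KK_col_le_one hF hop n hv

lemma cB_le_opNorm (hF : Measurable (Function.uncurry F)) (hop : kernelOpNorm F ≤ 1)
    (hnn : ∀ u ∈ Icc (0:ℝ) 1, ∀ v ∈ Icc (0:ℝ) 1, 0 ≤ F u v) (n : ℕ) :
    cB F n ≤ kernelOpNorm (kernelIter F n) :=
  iSup₂_le fun _ hv => KK_col_le_opNorm hF hop hnn n hv

lemma cB_submul (hF : Measurable (Function.uncurry F)) (m n : ℕ) :
    cB F (m + n + 1) ≤ cB F m * cB F n := by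
  refine iSup₂_le fun v hv => ?_
  have hswap : (∫⁻ u in Icc (0:ℝ) 1, ∫⁻ w in Icc (0:ℝ) 1, KK F m u w * KK F n w v)
      = ∫⁻ w in Icc (0:ℝ) 1, ∫⁻ u in Icc (0:ℝ) 1, KK F m u w * KK F n w v := by
    apply lintegral_lintegral_swap
    exact (((KK_meas hF m).comp (measurable_fst.prodMk measurable_snd)).mul
      ((KK_meas hF n).comp (measurable_snd.prodMk measurable_const))).aemeasurable
  calc (∫⁻ u in Icc (0:ℝ) 1, KK F (m + n + 1) u v)
      = ∫⁻ u in Icc (0:ℝ) 1, ∫⁻ w in Icc (0:ℝ) 1, KK F m u w * KK F n w v :=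
        lintegral_congr fun u => KK_add hF m n u v
    _ = ∫⁻ w in Icc (0:ℝ) 1, ∫⁻ u in Icc (0:ℝ) 1, KK F m u w * KK F n w v := hswap
    _ = ∫⁻ w in Icc (0:ℝ) 1, (∫⁻ u in Icc (0:ℝ) 1, KK F m u w) * KK F n w v := by
        refine lintegral_congr fun w => ?_
        exact lintegral_mul_const'' _ ((KK_meas hF m).comp
          (measurable_id.prodMk measurable_const)).aemeasurable
    _ ≤ ∫⁻ w in Icc (0:ℝ) 1, cB F m * KK F n w v := by
        refine setLIntegral_mono' measurableSet_Icc fun w hw => ?_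
        refine mul_le_mul_left ?_ _
        exact le_iSup₂ (f := fun w (_ : w ∈ Icc (0:ℝ) 1) => ∫⁻ u in Icc (0:ℝ) 1, KK F m u w) w hw
    _ = cB F m * ∫⁻ w in Icc (0:ℝ) 1, KK F n w v := by
        have hm : AEMeasurable (fun w => KK F n w v) (volume.restrict (Icc (0:ℝ) 1)) :=
          ((KK_meas hF n).comp measurable_prodMk_right).aemeasurable
        rw [lintegral_const_mul'' _ hm]
    _ ≤ cB F m * cB F n := by
        refine mul_le_mul_right ?_ _
        exact le_iSup₂ (f := fun w (_ : w ∈ Icc (0:ℝ) 1) => ∫⁻ u in Icc (0:ℝ) 1, KK F n u w) v hv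

lemma cB_antitone (hF : Measurable (Function.uncurry F)) (hop : kernelOpNorm F ≤ 1) :
    Antitone (cB F) := by
  refine antitone_nat_of_succ_le fun n => ?_
  have h := cB_submul hF 0 n
  calc cB F (n+1) = cB F (0 + n + 1) := by norm_num
  _ ≤ cB F 0 * cB F n := h
  _ ≤ 1 * cB F n := mul_le_mul_left (cB_le_one hF hop 0) _
  _ = cB F n := one_mul _

lemma cB_decay (hF : Measurable (Function.uncurry F)) (hop : kernelOpNorm F ≤ 1)
    {γ : ℝ≥0∞} {k : ℕ} (hk : 1 ≤ k) (hγ : cB F (k-1) ≤ γ) (j : ℕ) :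
    cB F (j * k + (k - 1)) ≤ γ ^ (j + 1) := by
  obtain ⟨m, rfl⟩ : ∃ m, k = m + 1 := ⟨k-1, (Nat.succ_pred_eq_of_pos hk).symm⟩
  simp only [Nat.add_sub_cancel] at hγ ⊢
  induction j with
  | zero => simpa using hγ
  | succ j ih =>
    have harith : (j+1) * (m+1) + m = m + (j * (m+1) + m) + 1 := by ring
    rw [harith]
    calc cB F (m + (j * (m+1) + m) + 1) ≤ cB F m * cB F (j * (m+1) + m) :=
        cB_submul hF _ _
    _ ≤ γ * γ ^ (j+1) := mul_le_mul' hγ ih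
    _ = γ ^ (j+1+1) := by rw [pow_succ]; ring


-- NEW MATERIAL

/-- countable-sup version of `pathSup`, measurable. -/
def pathSup' (T : ℝ) (f : ℝ → ℝ → ℝ) (u : ℝ) : ℝ≥0∞ :=
  ⨆ n, ENNReal.ofReal |f u (dSeq T n)|

lemma pathSup'_le_pathSup {T : ℝ} (hT : 0 ≤ T) (f : ℝ → ℝ → ℝ) (u : ℝ) :
    pathSup' T f u ≤ pathSup T f u := by
  refine iSup_le fun n => ?_
  exact le_iSup₂ (f := fun t (_ : t ∈ Icc (0:ℝ) T) => ENNReal.ofReal |f u t|)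
    (dSeq T n) (dSeq_mem hT n)

lemma pathSup_eq_pathSup' {T : ℝ} (hT : 0 ≤ T) {f : ℝ → ℝ → ℝ} {u : ℝ}
    (hrc : ∀ s ∈ Ico (0:ℝ) T, ContinuousWithinAt (f u) (Ici s) s) :
    pathSup T f u = pathSup' T f u := by
  refine le_antisymm ?_ (pathSup'_le_pathSup hT f u)
  refine iSup₂_le fun t ht => ?_
  exact ofReal_le_iSup_of_mem_closure (mem_closure_dSeq hrc t ht)

lemma pathSup'_meas {T : ℝ} {f : ℝ → ℝ → ℝ}
    (hf : ∀ t ∈ Icc (0:ℝ) T, Measurable fun u => f u t) (hT : 0 ≤ T) :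
    Measurable (pathSup' T f) := by
  refine Measurable.iSup fun n => ?_
  exact ENNReal.measurable_ofReal.comp ((hf (dSeq T n) (dSeq_mem hT n)).abs)

/-- regularity data propagated through `piMap`. -/
structure Aux (T : ℝ) (W : ℝ → ℝ → ℝ) : Prop where
  slice : ∀ s ∈ Icc (0:ℝ) T, AEStronglyMeasurable (fun v => W v s)
    (volume.restrict (Icc (0:ℝ) 1))
  rc : ∀ᵐ v ∂(volume.restrict (Icc (0:ℝ) 1)), ∀ t ∈ Ico (0:ℝ) T,
    ContinuousWithinAt (W v) (Ici t) t
  bound : ∃ m : ℝ → ℝ≥0∞, Measurable m ∧ (∫⁻ v in Icc (0:ℝ) 1, m v) < ⊤ ∧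
    ∀ᵐ v ∂(volume.restrict (Icc (0:ℝ) 1)), ∀ s ∈ Icc (0:ℝ) T, ENNReal.ofReal |W v s| ≤ m v

lemma memDT_aux {T : ℝ} (hT : 0 ≤ T) {W : ℝ → ℝ → ℝ} (hW : MemDT T W) : Aux T W := by
  refine ⟨?_, ?_, ?_⟩
  · intro s hs
    exact (hW.meas s hs).aestronglyMeasurable
  · filter_upwards [ae_restrict_mem measurableSet_Icc] with v hv
    exact hW.rightCont v hv
  · refine ⟨pathSup' T W, pathSup'_meas hW.meas hT, ?_, ?_⟩
    · refine lt_of_le_of_lt (lintegral_mono fun u => pathSup'_le_pathSup hT W u) ?_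
      exact lt_of_le_of_ne le_top hW.finite
    · filter_upwards [ae_restrict_mem measurableSet_Icc] with v hv
      intro s hs
      rw [← pathSup_eq_pathSup' hT (hW.rightCont v hv)]
      exact le_iSup₂ (f := fun t (_ : t ∈ Icc (0:ℝ) T) => ENNReal.ofReal |W v t|) s hs

lemma piMap_nonneg (X F W : ℝ → ℝ → ℝ) (u t : ℝ) : 0 ≤ piMap X F W u t := by
  rcases le_or_gt 0 t with ht | ht
  · have hne : Nonempty (Icc (0:ℝ) t) := Set.Nonempty.to_subtype (nonempty_Icc.2 ht)
    by_cases hb : BddAbove (range fun s : Icc (0:ℝ) t =>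
      max (-(X u s.1) + kernelApply F W u s.1) 0)
    · exact le_trans (le_max_right _ 0) (le_ciSup hb ⟨0, le_refl (0:ℝ), ht⟩)
    · rw [piMap, Real.iSup_of_not_bddAbove hb]
  · have : IsEmpty (Icc (0:ℝ) t) := by
      rw [Set.isEmpty_coe_sort, Icc_eq_empty_iff]
      intro h; linarith
    rw [piMap, Real.iSup_of_isEmpty]

/-- right continuity of a running supremum (H4) -/
lemma running_sup_rc {G : ℝ → ℝ} {T b : ℝ}
    (hb : ∀ s ∈ Icc (0:ℝ) T, G s ≤ b)
    (hrc : ∀ s ∈ Ico (0:ℝ) T, ContinuousWithinAt G (Ici s) s) :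
    ∀ t ∈ Ico (0:ℝ) T, ContinuousWithinAt (fun t' => ⨆ s : Icc (0:ℝ) t', G s.1) (Ici t) t := by
  intro t ht
  set S : ℝ → ℝ := fun t' => ⨆ s : Icc (0:ℝ) t', G s.1 with hS
  have hbdd : ∀ t' ∈ Icc (0:ℝ) T, BddAbove (G '' Icc (0:ℝ) t') := by
    intro t' ht'
    refine ⟨b, ?_⟩
    rintro x ⟨s, hs, rfl⟩
    exact hb s ⟨hs.1, le_trans hs.2 ht'.2⟩
  have hSrange : ∀ t', S t' = sSup (G '' Icc (0:ℝ) t') := by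
    intro t'
    rw [hS]
    simp only
    rw [iSup]
    congr 1
    ext x
    constructor
    · rintro ⟨⟨s, hs⟩, rfl⟩; exact ⟨s, hs, rfl⟩
    · rintro ⟨s, hs, rfl⟩; exact ⟨⟨s, hs⟩, rfl⟩
  have hmono : ∀ t1 t2, 0 ≤ t1 → t1 ≤ t2 → t2 ≤ T → S t1 ≤ S t2 := by
    intro t1 t2 h0 h12 h2T
    rw [hSrange, hSrange]
    refine csSup_le_csSup (hbdd t2 ⟨le_trans h0 h12, h2T⟩) ?_ ?_
    · exact ⟨G 0, 0, ⟨le_refl _, h0⟩, rfl⟩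
    · exact image_mono (Icc_subset_Icc_right h12)
  rw [Metric.continuousWithinAt_iff]
  intro ε hε
  -- use right continuity of G at t
  have hrt := hrc t ht
  rw [Metric.continuousWithinAt_iff] at hrt
  obtain ⟨δ₀, hδ₀, hδ⟩ := hrt (ε/2) (by linarith)
  refine ⟨min δ₀ (T - t), lt_min hδ₀ (by linarith [ht.2]), ?_⟩
  intro x hx hxd
  have hxt : t ≤ x := hx
  have hxT : x < T := by
    rw [Real.dist_eq] at hxd
    have h2 := lt_of_le_of_lt (le_abs_self _) hxd
    have := lt_min_iff.1 h2
    linarith [this.2]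
  have hmono1 : S t ≤ S x := hmono t x ht.1 hxt (le_of_lt hxT)
  have hupper : S x ≤ max (S t) (G t + ε/2) := by
    rw [hSrange x]
    refine csSup_le ⟨G 0, 0, ⟨le_refl _, le_trans ht.1 hxt⟩, rfl⟩ ?_
    rintro y ⟨s, hs, rfl⟩
    rcases le_or_gt s t with hst | hst
    · refine le_max_of_le_left ?_
      rw [hSrange t]
      exact le_csSup (hbdd t ⟨ht.1, le_of_lt ht.2⟩) ⟨s, ⟨hs.1, hst⟩, rfl⟩
    · refine le_max_of_le_right ?_
      have hsd : dist s t < δ₀ := by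
        rw [Real.dist_eq, abs_of_nonneg (by linarith)]
        rw [Real.dist_eq] at hxd
        have h2 := lt_of_le_of_lt (le_abs_self _) hxd
        have := lt_min_iff.1 h2
        linarith [hs.2, this.1]
      have := hδ (le_of_lt hst : s ∈ Ici t) hsd
      rw [Real.dist_eq] at this
      have := lt_of_le_of_lt (le_abs_self _) this
      linarith
  have hlower : G t ≤ S t := by
    rw [hSrange t]
    exact le_csSup (hbdd t ⟨ht.1, le_of_lt ht.2⟩) ⟨t, ⟨ht.1, le_refl t⟩, rfl⟩
  rw [Real.dist_eq, abs_of_nonneg (by linarith : (0:ℝ) ≤ S x - S t)]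
  have : S x ≤ S t + ε/2 := by
    rcases max_cases (S t) (G t + ε/2) with ⟨h1, h2⟩ | ⟨h1, h2⟩
    · rw [h1] at hupper; linarith
    · rw [h1] at hupper; linarith
  linarith


abbrev nuI : Measure ℝ := volume.restrict (Icc (0:ℝ) 1)

lemma aesm_snd {g : ℝ → ℝ} (hg : AEStronglyMeasurable g nuI) :
    AEStronglyMeasurable (fun p : ℝ × ℝ => g p.2) (nuI.prod nuI) := by
  have h1 : AEStronglyMeasurable g (Measure.map Prod.snd (nuI.prod nuI)) := by
    rw [Measure.map_snd_prod]
    exact hg.mono_ac Measure.smul_absolutelyContinuous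
  exact h1.comp_measurable measurable_snd

section KABound

variable {T : ℝ} {X F W : ℝ → ℝ → ℝ} {m : ℝ → ℝ≥0∞}

/-- `ℝ≥0∞` bound for kernelApply -/
lemma kernelApply_bound (F W : ℝ → ℝ → ℝ) {m : ℝ → ℝ≥0∞}
    (hm_bd : ∀ᵐ v ∂nuI, ∀ s ∈ Icc (0:ℝ) T, ENNReal.ofReal |W v s| ≤ m v)
    (u : ℝ) {s : ℝ} (hs : s ∈ Icc (0:ℝ) T) :
    ENNReal.ofReal |kernelApply F W u s| ≤ ∫⁻ v in Icc (0:ℝ) 1, (‖F u v‖₊ : ℝ≥0∞) * m v := by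
  rw [kernelApply, ← Real.ennnorm_eq_ofReal_abs]
  refine le_trans (enorm_integral_le_lintegral_enorm _) ?_
  refine lintegral_mono_ae ?_
  filter_upwards [hm_bd] with v hv
  rw [enorm_mul]
  exact mul_le_mul_right (le_trans (le_of_eq (Real.ennnorm_eq_ofReal_abs _)) (hv s hs)) _

lemma Bu_lintegral_le (hFm : Measurable (Function.uncurry F))
    (hop : kernelOpNorm F ≤ 1) (hm_meas : Measurable m) :
    (∫⁻ u in Icc (0:ℝ) 1, ∫⁻ v in Icc (0:ℝ) 1, (‖F u v‖₊ : ℝ≥0∞) * m v)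
      ≤ ∫⁻ v in Icc (0:ℝ) 1, m v := by
  have hswap : (∫⁻ u in Icc (0:ℝ) 1, ∫⁻ v in Icc (0:ℝ) 1, (‖F u v‖₊ : ℝ≥0∞) * m v)
      = ∫⁻ v in Icc (0:ℝ) 1, ∫⁻ u in Icc (0:ℝ) 1, (‖F u v‖₊ : ℝ≥0∞) * m v := by
    apply lintegral_lintegral_swap
    exact ((measurable_coe_nnreal_ennreal.comp (measurable_nnnorm.comp hFm)).mul
      (hm_meas.comp measurable_snd)).aemeasurable
  rw [hswap]
  calc (∫⁻ v in Icc (0:ℝ) 1, ∫⁻ u in Icc (0:ℝ) 1, (‖F u v‖₊ : ℝ≥0∞) * m v)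
      = ∫⁻ v in Icc (0:ℝ) 1, (∫⁻ u in Icc (0:ℝ) 1, (‖F u v‖₊ : ℝ≥0∞)) * m v := by
        refine lintegral_congr fun v => ?_
        have hmm : AEMeasurable (fun u => (‖F u v‖₊ : ℝ≥0∞)) nuI :=
          (measurable_coe_nnreal_ennreal.comp (measurable_nnnorm.comp
            (hFm.comp measurable_prodMk_right))).aemeasurable
        exact lintegral_mul_const'' _ hmm
    _ ≤ ∫⁻ v in Icc (0:ℝ) 1, 1 * m v := by
        refine setLIntegral_mono' measurableSet_Icc fun v hv => ?_
        refine mul_le_mul_left ?_ _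
        refine le_trans (le_of_eq (lintegral_congr fun u => Real.ennnorm_eq_ofReal_abs _)) ?_
        refine le_trans ?_ hop
        exact le_iSup₂ (f := fun w (_ : w ∈ Icc (0:ℝ) 1) =>
          ∫⁻ u in Icc (0:ℝ) 1, ENNReal.ofReal |F u w|) v hv
    _ = ∫⁻ v in Icc (0:ℝ) 1, m v := by simp

set_option maxHeartbeats 1000000 in
/-- a.e. right continuity of `kernelApply F W u` (dominated convergence) -/
lemma kernelApply_rc {T : ℝ} (hFm : Measurable (Function.uncurry F))
    (hm_meas : Measurable m) (hm_fin : ∀ᵐ v ∂nuI, m v < ⊤)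
    (hm_bd : ∀ᵐ v ∂nuI, ∀ s ∈ Icc (0:ℝ) T, ENNReal.ofReal |W v s| ≤ m v)
    (hslice : ∀ s ∈ Icc (0:ℝ) T, AEStronglyMeasurable (fun v => W v s) nuI)
    (hWrc : ∀ᵐ v ∂nuI, ∀ t ∈ Ico (0:ℝ) T, ContinuousWithinAt (W v) (Ici t) t)
    {u : ℝ} (hu : (∫⁻ v in Icc (0:ℝ) 1, (‖F u v‖₊ : ℝ≥0∞) * m v) < ⊤) :
    ∀ s ∈ Ico (0:ℝ) T, ContinuousWithinAt (kernelApply F W u) (Ici s) s := by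
  intro s hs
  have hT0 : 0 ≤ T := le_of_lt (lt_of_le_of_lt hs.1 hs.2)
  have hmem : ∀ᶠ s' in nhdsWithin s (Ici s), s' ∈ Icc (0:ℝ) T := by
    have h1 : ∀ᶠ s' in nhdsWithin s (Ici s), s' ∈ Ici s := eventually_mem_nhdsWithin
    have h2 : ∀ᶠ s' in nhdsWithin s (Ici s), s' < T := by
      refine eventually_nhdsWithin_of_eventually_nhds ?_
      exact eventually_lt_nhds hs.2
    filter_upwards [h1, h2] with s' h1' h2'
    exact ⟨le_trans hs.1 h1', le_of_lt h2'⟩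
  show Tendsto (fun s' => ∫ v in Icc (0:ℝ) 1, F u v * W v s') (nhdsWithin s (Ici s))
    (nhds (∫ v in Icc (0:ℝ) 1, F u v * W v s))
  refine tendsto_integral_filter_of_dominated_convergence
    (fun v => ((‖F u v‖₊ : ℝ≥0∞) * m v).toReal) ?_ ?_ ?_ ?_
  · filter_upwards [hmem] with s' hs'
    refine AEStronglyMeasurable.mul ?_ (hslice s' hs')
    exact (hFm.comp measurable_prodMk_left).aestronglyMeasurable
  · filter_upwards [hmem] with s' hs'
    filter_upwards [hm_fin, hm_bd] with v hvfin hvbd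
    have h1 : |W v s'| ≤ (m v).toReal := by
      have := hvbd s' hs'
      have h2 := ENNReal.toReal_mono hvfin.ne this
      rwa [ENNReal.toReal_ofReal (abs_nonneg _)] at h2
    rw [Real.norm_eq_abs, abs_mul, ENNReal.toReal_mul]
    have h3 : ((‖F u v‖₊ : ℝ≥0∞)).toReal = |F u v| := by
      simp [Real.norm_eq_abs]
    rw [h3]
    exact mul_le_mul_of_nonneg_left h1 (abs_nonneg _)
  · refine ⟨?_, ?_⟩
    · apply Measurable.aestronglyMeasurable
      exact (((measurable_coe_nnreal_ennreal.comp (measurable_nnnorm.comp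
        (hFm.comp (measurable_prodMk_left : Measurable fun v => (u, v))))).mul
        hm_meas)).ennreal_toReal
    · rw [HasFiniteIntegral]
      refine lt_of_le_of_lt ?_ hu
      refine lintegral_mono fun v => ?_
      rw [Real.enorm_eq_ofReal_abs, ENNReal.abs_toReal]
      exact ENNReal.ofReal_toReal_le
  · filter_upwards [hWrc] with v hv
    have h1 : ContinuousWithinAt (W v) (Ici s) s := hv s hs
    exact h1.tendsto.const_mul _

end KABound


section G2

variable {T : ℝ} {X F W : ℝ → ℝ → ℝ}

lemma kA_slice (hFm : Measurable (Function.uncurry F))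
    (hsl : AEStronglyMeasurable (fun v => W v s) nuI) :
    AEStronglyMeasurable (fun u => kernelApply F W u s) nuI := by
  have h1 : AEStronglyMeasurable (fun p : ℝ × ℝ => F p.1 p.2 * W p.2 s) (nuI.prod nuI) :=
    hFm.aestronglyMeasurable.mul (aesm_snd hsl)
  exact h1.integral_prod_right'

set_option maxHeartbeats 1000000 in
lemma aux_piMap (hT : 0 ≤ T) (hX : MemDT T X) (hFm : Measurable (Function.uncurry F))
    (hop : kernelOpNorm F ≤ 1) (hAux : Aux T W) : Aux T (piMap X F W) := by
  obtain ⟨m, hm_meas, hm_fin, hm_bd⟩ := hAux.bound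
  have hm_ae : ∀ᵐ v ∂nuI, m v < ⊤ := ae_lt_top hm_meas hm_fin.ne
  set Bu : ℝ → ℝ≥0∞ := fun u => ∫⁻ v in Icc (0:ℝ) 1, (‖F u v‖₊ : ℝ≥0∞) * m v with hBu
  have hBu_meas : Measurable Bu := by
    apply Measurable.lintegral_prod_right'
      (f := fun p : ℝ × ℝ => (‖F p.1 p.2‖₊ : ℝ≥0∞) * m p.2)
    exact (measurable_coe_nnreal_ennreal.comp (measurable_nnnorm.comp hFm)).mul
      (hm_meas.comp measurable_snd)
  have hBu_int : (∫⁻ u in Icc (0:ℝ) 1, Bu u) < ⊤ :=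
    lt_of_le_of_lt (Bu_lintegral_le hFm hop hm_meas) hm_fin
  have hBu_ae : ∀ᵐ u ∂nuI, Bu u < ⊤ := ae_lt_top hBu_meas hBu_int.ne
  have hXps_meas : Measurable (pathSup' T X) := pathSup'_meas hX.meas hT
  have hXps_int : (∫⁻ u in Icc (0:ℝ) 1, pathSup' T X u) < ⊤ :=
    lt_of_le_of_lt (lintegral_mono fun u => pathSup'_le_pathSup hT X u)
      (lt_of_le_of_ne le_top hX.finite)
  have hXps_ae : ∀ᵐ u ∂nuI, pathSup' T X u < ⊤ := ae_lt_top hXps_meas hXps_int.ne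
  have hXbd : ∀ u ∈ Icc (0:ℝ) 1, ∀ s ∈ Icc (0:ℝ) T,
      ENNReal.ofReal |X u s| ≤ pathSup' T X u := by
    intro u hu s hs
    rw [← pathSup_eq_pathSup' hT (hX.rightCont u hu)]
    exact le_iSup₂ (f := fun t (_ : t ∈ Icc (0:ℝ) T) => ENNReal.ofReal |X u t|) s hs
  have hkA_rc : ∀ᵐ u ∂nuI, ∀ s ∈ Ico (0:ℝ) T,
      ContinuousWithinAt (kernelApply F W u) (Ici s) s := by
    filter_upwards [hBu_ae] with u hu
    exact kernelApply_rc hFm hm_meas hm_ae hm_bd hAux.slice hAux.rc hu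
  have hkA_bd : ∀ u, ∀ s ∈ Icc (0:ℝ) T, ENNReal.ofReal |kernelApply F W u s| ≤ Bu u :=
    fun u s hs => kernelApply_bound F W hm_bd u hs
  set G : ℝ → ℝ → ℝ := fun u s => max (-(X u s) + kernelApply F W u s) 0 with hGdef
  have hG_rc : ∀ᵐ u ∂nuI, ∀ s ∈ Ico (0:ℝ) T, ContinuousWithinAt (G u) (Ici s) s := by
    filter_upwards [hkA_rc, ae_restrict_mem measurableSet_Icc] with u h1 h2
    intro s hs
    exact (((hX.rightCont u h2 s hs).neg.add (h1 s hs)).max continuousWithinAt_const)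
  have hGo : ∀ᵐ u ∂nuI, ∀ s ∈ Icc (0:ℝ) T,
      ENNReal.ofReal (G u s) ≤ pathSup' T X u + Bu u := by
    filter_upwards [ae_restrict_mem measurableSet_Icc] with u hu
    intro s hs
    have h1 : G u s ≤ |(-(X u s)) + kernelApply F W u s| := le_trans (max_le (le_abs_self _)
      (abs_nonneg _)) (le_refl _)
    have h2 : |(-(X u s)) + kernelApply F W u s| ≤ |X u s| + |kernelApply F W u s| := by
      calc |(-(X u s)) + kernelApply F W u s| ≤ |(-(X u s))| + |kernelApply F W u s| :=
          abs_add_le _ _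
      _ = |X u s| + |kernelApply F W u s| := by rw [abs_neg]
    calc ENNReal.ofReal (G u s) ≤ ENNReal.ofReal (|X u s| + |kernelApply F W u s|) :=
        ENNReal.ofReal_le_ofReal (le_trans h1 h2)
    _ = ENNReal.ofReal |X u s| + ENNReal.ofReal |kernelApply F W u s| :=
        ENNReal.ofReal_add (abs_nonneg _) (abs_nonneg _)
    _ ≤ pathSup' T X u + Bu u := add_le_add (hXbd u hu s hs) (hkA_bd u s hs)
  have hG_bd : ∀ᵐ u ∂nuI, ∀ s ∈ Icc (0:ℝ) T, G u s ≤ (pathSup' T X u + Bu u).toReal := by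
    filter_upwards [hGo, hXps_ae, hBu_ae] with u h1 h2 h3
    intro s hs
    have hfin : pathSup' T X u + Bu u ≠ ⊤ := by
      rw [ENNReal.add_ne_top]; exact ⟨h2.ne, h3.ne⟩
    have h4 := ENNReal.toReal_mono hfin (h1 s hs)
    rwa [ENNReal.toReal_ofReal (le_max_right _ 0)] at h4
  refine ⟨?_, ?_, ?_⟩
  · -- slices are AESM
    intro t ht
    have hae : (fun u => ⨆ n, G u (dSeq t n)) =ᶠ[ae nuI] (fun u => piMap X F W u t) := by
      filter_upwards [hG_rc] with u hu
      exact (iSup_eq_iSup_dSeq ht.1 (fun s hs => hu s ⟨hs.1, lt_of_lt_of_le hs.2 ht.2⟩)).symm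
    have hGn : ∀ n : ℕ, AEMeasurable (fun u => G u (dSeq t n)) nuI := by
      intro n
      have hsn : dSeq t n ∈ Icc (0:ℝ) T :=
        ⟨(dSeq_mem ht.1 n).1, le_trans (dSeq_mem ht.1 n).2 ht.2⟩
      refine AEMeasurable.max ?_ aemeasurable_const
      refine AEMeasurable.add ?_ ?_
      · exact (hX.meas _ hsn).aemeasurable.neg
      · exact (kA_slice hFm (hAux.slice _ hsn)).aemeasurable
    exact ((AEMeasurable.iSup hGn).aestronglyMeasurable).congr hae
  · -- right continuity of paths
    filter_upwards [hG_rc, hG_bd] with u h1 h2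
    intro t ht
    exact running_sup_rc h2 h1 t ht
  · -- majorant
    refine ⟨fun u => pathSup' T X u + Bu u, hXps_meas.add hBu_meas, ?_, ?_⟩
    · rw [lintegral_add_left hXps_meas]
      exact ENNReal.add_lt_top.2 ⟨hXps_int, hBu_int⟩
    · filter_upwards [hGo] with u h1
      intro t ht
      have hne : Nonempty (Icc (0:ℝ) t) := Set.Nonempty.to_subtype (nonempty_Icc.2 ht.1)
      rw [abs_of_nonneg (piMap_nonneg X F W u t)]
      refine le_trans (ofReal_iSup_le _) ?_
      refine iSup_le fun s => ?_
      exact h1 s.1 ⟨s.2.1, le_trans s.2.2 ht.2⟩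


end G2

lemma aux_piIter {T : ℝ} {X F W : ℝ → ℝ → ℝ} (hT : 0 ≤ T) (hX : MemDT T X)
    (hFm : Measurable (Function.uncurry F)) (hop : kernelOpNorm F ≤ 1)
    (hAux : Aux T W) : ∀ n, Aux T (piIter X F W n) := by
  intro n
  induction n with
  | zero => exact hAux
  | succ n ih => exact aux_piMap hT hX hFm hop ih

lemma step_bound {T : ℝ} (X F V1 V2 : ℝ → ℝ → ℝ)
    (hFm : Measurable (Function.uncurry F))
    (hD : ∀ s ∈ Icc (0:ℝ) T, AEStronglyMeasurable (fun v => V1 v s - V2 v s) nuI)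
    (u : ℝ) :
    pathSup T (fun a b => piMap X F V1 a b - piMap X F V2 a b) u
      ≤ ∫⁻ v in Icc (0:ℝ) 1, (‖F u v‖₊ : ℝ≥0∞) *
          pathSup T (fun a b => V1 a b - V2 a b) v := by
  refine iSup₂_le fun t ht => ?_
  have hne : Nonempty (Icc (0:ℝ) t) := Set.Nonempty.to_subtype (nonempty_Icc.2 ht.1)
  have h1 : ENNReal.ofReal |piMap X F V1 u t - piMap X F V2 u t|
      ≤ ⨆ s : Icc (0:ℝ) t, ENNReal.ofReal
          |(max (-(X u s.1) + kernelApply F V1 u s.1) 0)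
            - max (-(X u s.1) + kernelApply F V2 u s.1) 0| :=
    ofReal_abs_iSup_sub_iSup_le _ _
  refine le_trans h1 (iSup_le fun s => ?_)
  have hsT : s.1 ∈ Icc (0:ℝ) T := ⟨s.2.1, le_trans s.2.2 ht.2⟩
  have h2 : |(max (-(X u s.1) + kernelApply F V1 u s.1) 0)
        - max (-(X u s.1) + kernelApply F V2 u s.1) 0|
      ≤ |kernelApply F V1 u s.1 - kernelApply F V2 u s.1| := by
    refine le_trans (abs_max_sub_max_le_abs _ _ 0) ?_
    have : (-(X u s.1) + kernelApply F V1 u s.1) - (-(X u s.1) + kernelApply F V2 u s.1)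
        = kernelApply F V1 u s.1 - kernelApply F V2 u s.1 := by ring
    rw [this]
  refine le_trans (ENNReal.ofReal_le_ofReal h2) ?_
  have hdm : AEStronglyMeasurable
      (fun v => F u v * V1 v s.1 - F u v * V2 v s.1) nuI := by
    have h3 : AEStronglyMeasurable (fun v => F u v * (V1 v s.1 - V2 v s.1)) nuI :=
      ((hFm.comp (measurable_prodMk_left : Measurable fun v => (u, v))).aestronglyMeasurable).mul
        (hD s.1 hsT)
    refine h3.congr (Eventually.of_forall fun v => by ring)
  refine le_trans (abs_integral_sub_le _ _ hdm) ?_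
  have h4 : ∀ v, ENNReal.ofReal |F u v * V1 v s.1 - F u v * V2 v s.1|
      = (‖F u v‖₊ : ℝ≥0∞) * ENNReal.ofReal |V1 v s.1 - V2 v s.1| := by
    intro v
    have : F u v * V1 v s.1 - F u v * V2 v s.1 = F u v * (V1 v s.1 - V2 v s.1) := by ring
    rw [this, abs_mul, ENNReal.ofReal_mul (abs_nonneg _), Real.ennnorm_eq_ofReal_abs]
  rw [lintegral_congr h4]
  refine lintegral_mono fun v => ?_
  refine mul_le_mul_right ?_ _
  exact le_iSup₂ (f := fun t (_ : t ∈ Icc (0:ℝ) T) =>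
    ENNReal.ofReal |V1 v t - V2 v t|) s.1 hsT

lemma main_bound {T : ℝ} {X F : ℝ → ℝ → ℝ} (hT : 0 ≤ T) (hX : MemDT T X)
    (hFm : Measurable (Function.uncurry F)) (hop : kernelOpNorm F ≤ 1)
    {V1 V2 : ℝ → ℝ → ℝ} (hA1 : Aux T V1) (hA2 : Aux T V2)
    {h' : ℝ → ℝ≥0∞} (hh : Measurable h')
    (hbd : ∀ v ∈ Icc (0:ℝ) 1, pathSup T (fun a b => V1 a b - V2 a b) v ≤ h' v) :
    ∀ n, ∀ u, pathSup T (fun a b => piIter X F V1 (n+1) a b - piIter X F V2 (n+1) a b) u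
      ≤ ∫⁻ v in Icc (0:ℝ) 1, KK F n u v * h' v := by
  intro n
  induction n with
  | zero =>
    intro u
    refine le_trans (step_bound X F V1 V2 hFm
      (fun s hs => ((hA1.slice s hs).sub (hA2.slice s hs))) u) ?_
    refine setLIntegral_mono' measurableSet_Icc fun v hv => ?_
    exact mul_le_mul_right (hbd v hv) _
  | succ n ih =>
    intro u
    have hD : ∀ s ∈ Icc (0:ℝ) T, AEStronglyMeasurable
        (fun v => piIter X F V1 (n+1) v s - piIter X F V2 (n+1) v s) nuI := by
      intro s hs
      exact ((aux_piIter hT hX hFm hop hA1 (n+1)).slice s hs).sub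
        ((aux_piIter hT hX hFm hop hA2 (n+1)).slice s hs)
    refine le_trans (step_bound X F _ _ hFm hD u) ?_
    have h5 : ∀ w, pathSup T (fun a b => piIter X F V1 (n+1) a b - piIter X F V2 (n+1) a b) w
        ≤ ∫⁻ v in Icc (0:ℝ) 1, KK F n w v * h' v := ih
    calc (∫⁻ w in Icc (0:ℝ) 1, (‖F u w‖₊ : ℝ≥0∞) *
          pathSup T (fun a b => piIter X F V1 (n+1) a b - piIter X F V2 (n+1) a b) w)
        ≤ ∫⁻ w in Icc (0:ℝ) 1, (‖F u w‖₊ : ℝ≥0∞) *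
            ∫⁻ v in Icc (0:ℝ) 1, KK F n w v * h' v := by
          refine lintegral_mono fun w => mul_le_mul_right (h5 w) _
      _ = ∫⁻ w in Icc (0:ℝ) 1, ∫⁻ v in Icc (0:ℝ) 1,
            (‖F u w‖₊ : ℝ≥0∞) * (KK F n w v * h' v) := by
          refine lintegral_congr fun w => ?_
          have hm : AEMeasurable (fun v => KK F n w v * h' v) nuI :=
            (((KK_meas hFm n).comp measurable_prodMk_left).mul hh).aemeasurable
          rw [lintegral_const_mul'' _ hm]
      _ = ∫⁻ v in Icc (0:ℝ) 1, ∫⁻ w in Icc (0:ℝ) 1,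
            (‖F u w‖₊ : ℝ≥0∞) * (KK F n w v * h' v) := by
          apply lintegral_lintegral_swap
          refine (Measurable.mul ?_ (Measurable.mul ?_ ?_)).aemeasurable
          · exact measurable_coe_nnreal_ennreal.comp (measurable_nnnorm.comp
              (hFm.comp (measurable_const.prodMk measurable_fst)))
          · exact (KK_meas hFm n).comp (measurable_fst.prodMk measurable_snd)
          · exact hh.comp measurable_snd
      _ = ∫⁻ v in Icc (0:ℝ) 1, KK F (n+1) u v * h' v := by
          refine lintegral_congr fun v => ?_
          have hm : AEMeasurable (fun w => (‖F u w‖₊ : ℝ≥0∞) * KK F n w v) nuI :=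
            ((measurable_coe_nnreal_ennreal.comp (measurable_nnnorm.comp
              (hFm.comp (measurable_prodMk_left : Measurable fun w => (u, w))))).mul
              ((KK_meas hFm n).comp measurable_prodMk_right)).aemeasurable
          have hKK : KK F (n+1) u v
              = ∫⁻ w in Icc (0:ℝ) 1, (‖F u w‖₊ : ℝ≥0∞) * KK F n w v := rfl
          rw [hKK, ← lintegral_mul_const'' _ hm]
          exact lintegral_congr fun w => by ring

lemma tnorm_chain {T : ℝ} {X F : ℝ → ℝ → ℝ} (hT : 0 ≤ T) (hX : MemDT T X)
    (hFm : Measurable (Function.uncurry F)) (hop : kernelOpNorm F ≤ 1)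
    {V1 V2 : ℝ → ℝ → ℝ} (hA1 : Aux T V1) (hA2 : Aux T V2)
    {h' : ℝ → ℝ≥0∞} (hh : Measurable h')
    (hbd : ∀ v ∈ Icc (0:ℝ) 1, pathSup T (fun a b => V1 a b - V2 a b) v ≤ h' v)
    {C : ℝ≥0∞} (n : ℕ)
    (hC : ∀ v ∈ Icc (0:ℝ) 1, (∫⁻ u in Icc (0:ℝ) 1, KK F n u v) ≤ C) :
    TNorm T (fun a b => piIter X F V1 (n+1) a b - piIter X F V2 (n+1) a b)
      ≤ C * ∫⁻ v in Icc (0:ℝ) 1, h' v := by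
  have h1 := main_bound hT hX hFm hop hA1 hA2 hh hbd n
  calc TNorm T (fun a b => piIter X F V1 (n+1) a b - piIter X F V2 (n+1) a b)
      ≤ ∫⁻ u in Icc (0:ℝ) 1, ∫⁻ v in Icc (0:ℝ) 1, KK F n u v * h' v :=
        lintegral_mono fun u => h1 u
    _ = ∫⁻ v in Icc (0:ℝ) 1, ∫⁻ u in Icc (0:ℝ) 1, KK F n u v * h' v := by
        apply lintegral_lintegral_swap
        refine (Measurable.mul ?_ ?_).aemeasurable
        · exact (KK_meas hFm n).comp (measurable_fst.prodMk measurable_snd)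
        · exact hh.comp measurable_snd
    _ = ∫⁻ v in Icc (0:ℝ) 1, (∫⁻ u in Icc (0:ℝ) 1, KK F n u v) * h' v := by
        refine lintegral_congr fun v => ?_
        have hm : AEMeasurable (fun u => KK F n u v) nuI :=
          ((KK_meas hFm n).comp measurable_prodMk_right).aemeasurable
        rw [lintegral_mul_const'' _ hm]
    _ ≤ ∫⁻ v in Icc (0:ℝ) 1, C * h' v := by
        refine setLIntegral_mono' measurableSet_Icc fun v hv => ?_
        exact mul_le_mul_left (hC v hv) _
    _ = C * ∫⁻ v in Icc (0:ℝ) 1, h' v := lintegral_const_mul'' _ hh.aemeasurable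


lemma piIter_fix {T : ℝ} {X F Y : ℝ → ℝ → ℝ} (hreg : IsRegulator T X F Y) :
    ∀ n, ∀ u ∈ Icc (0:ℝ) 1, ∀ t ∈ Icc (0:ℝ) T, piIter X F Y n u t = Y u t := by
  intro n
  induction n with
  | zero => intro u hu t ht; rfl
  | succ n ih =>
    intro u hu t ht
    have hkA : ∀ s : Icc (0:ℝ) t, kernelApply F (piIter X F Y n) u s.1
        = kernelApply F Y u s.1 := by
      intro s
      refine setIntegral_congr_fun measurableSet_Icc fun v hv => ?_
      show F u v * piIter X F Y n v s.1 = F u v * Y v s.1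
      rw [ih v hv s.1 ⟨s.2.1, le_trans s.2.2 ht.2⟩]
    have h2 : piMap X F (piIter X F Y n) u t = piMap X F Y u t := by
      refine iSup_congr fun s => ?_
      rw [hkA s]
    show piMap X F (piIter X F Y n) u t = Y u t
    rw [h2, ← hreg.2 u hu t ht]


theorem final_statement
    (T : ℝ) (hT : 0 < T) (X F : ℝ → ℝ → ℝ) (γ : ℝ) (k : ℕ)
    (hX : MemDT T X) (hF : IsReflKernel F γ k) :
    (∀ W1 W2 : ℝ → ℝ → ℝ, MemDT T W1 → MemDT T W2 → ∀ n : ℕ, 1 ≤ n →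
      TNorm T (fun u t => piIter X F W1 n u t - piIter X F W2 n u t)
        ≤ kernelOpNorm (kernelIter F (n - 1))
            * TNorm T (fun u t => W1 u t - W2 u t)) ∧
    (∀ W Y : ℝ → ℝ → ℝ, MemDT T W → IsRegulator T X F Y →
      Filter.Tendsto (fun n : ℕ => TNorm T (fun u t => piIter X F W n u t - Y u t))
        Filter.atTop (nhds 0)) := by
  have hT0 : (0:ℝ) ≤ T := hT.le
  have hFm := hF.meas
  have hop := hF.opNorm_le_one
  have hnn := hF.nonneg
  constructor
  · intro W1 W2 hW1 hW2 n hn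
    obtain ⟨m0, rfl⟩ : ∃ m0, n = m0 + 1 := ⟨n - 1, (Nat.succ_pred_eq_of_pos hn).symm⟩
    simp only [Nat.add_sub_cancel]
    have hrc0 : ∀ v ∈ Icc (0:ℝ) 1, ∀ t ∈ Ico (0:ℝ) T,
        ContinuousWithinAt (fun b => W1 v b - W2 v b) (Ici t) t :=
      fun v hv t ht => (hW1.rightCont v hv t ht).sub (hW2.rightCont v hv t ht)
    have hmeas0 : ∀ t ∈ Icc (0:ℝ) T, Measurable fun v => W1 v t - W2 v t :=
      fun t ht => (hW1.meas t ht).sub (hW2.meas t ht)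
    have hh : Measurable (pathSup' T (fun a b => W1 a b - W2 a b)) :=
      pathSup'_meas hmeas0 hT0
    have hbd : ∀ v ∈ Icc (0:ℝ) 1, pathSup T (fun a b => W1 a b - W2 a b) v
        ≤ pathSup' T (fun a b => W1 a b - W2 a b) v :=
      fun v hv => le_of_eq (pathSup_eq_pathSup' hT0 (hrc0 v hv))
    have hC : ∀ v ∈ Icc (0:ℝ) 1, (∫⁻ u in Icc (0:ℝ) 1, KK F m0 u v)
        ≤ kernelOpNorm (kernelIter F m0) :=
      fun v hv => KK_col_le_opNorm hFm hop hnn m0 hv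
    have hmain := tnorm_chain hT0 hX hFm hop (memDT_aux hT0 hW1) (memDT_aux hT0 hW2)
      hh hbd m0 hC
    have heq : (∫⁻ v in Icc (0:ℝ) 1, pathSup' T (fun a b => W1 a b - W2 a b) v)
        = TNorm T (fun u t => W1 u t - W2 u t) := by
      refine lintegral_congr_ae ?_
      filter_upwards [ae_restrict_mem measurableSet_Icc] with v hv
      exact (pathSup_eq_pathSup' hT0 (hrc0 v hv)).symm
    rw [heq] at hmain
    exact hmain
  · intro W Y hW hreg
    have hY : MemDT T Y := hreg.1.memDT
    have htn : ∀ n, TNorm T (fun u t => piIter X F W n u t - Y u t)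
        = TNorm T (fun a b => piIter X F W n a b - piIter X F Y n a b) := by
      intro n
      refine lintegral_congr_ae ?_
      filter_upwards [ae_restrict_mem measurableSet_Icc] with u hu
      refine iSup_congr fun t => iSup_congr fun ht => ?_
      show ENNReal.ofReal |piIter X F W n u t - Y u t|
        = ENNReal.ofReal |piIter X F W n u t - piIter X F Y n u t|
      rw [piIter_fix hreg n u hu t ht]
    set h'' : ℝ → ℝ≥0∞ := fun v => pathSup' T W v + pathSup' T Y v with hh''def
    have hh'' : Measurable h'' := (pathSup'_meas hW.meas hT0).add (pathSup'_meas hY.meas hT0)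
    have hbd'' : ∀ v ∈ Icc (0:ℝ) 1, pathSup T (fun a b => W a b - Y a b) v ≤ h'' v := by
      intro v hv
      refine iSup₂_le fun t ht => ?_
      calc ENNReal.ofReal |W v t - Y v t| ≤ ENNReal.ofReal (|W v t| + |Y v t|) :=
          ENNReal.ofReal_le_ofReal (abs_sub _ _)
      _ = ENNReal.ofReal |W v t| + ENNReal.ofReal |Y v t| :=
          ENNReal.ofReal_add (abs_nonneg _) (abs_nonneg _)
      _ ≤ pathSup T W v + pathSup T Y v := by
          refine add_le_add ?_ ?_
          · exact le_iSup₂ (f := fun t (_ : t ∈ Icc (0:ℝ) T) => ENNReal.ofReal |W v t|) t ht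
          · exact le_iSup₂ (f := fun t (_ : t ∈ Icc (0:ℝ) T) => ENNReal.ofReal |Y v t|) t ht
      _ = h'' v := by
          rw [hh''def, pathSup_eq_pathSup' hT0 (hW.rightCont v hv),
            pathSup_eq_pathSup' hT0 (hY.rightCont v hv)]
    have hMfin : (∫⁻ v in Icc (0:ℝ) 1, h'' v) < ⊤ := by
      rw [hh''def, lintegral_add_left (pathSup'_meas hW.meas hT0)]
      refine ENNReal.add_lt_top.2 ⟨?_, ?_⟩
      · exact lt_of_le_of_lt (lintegral_mono fun v => pathSup'_le_pathSup hT0 W v)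
          (lt_of_le_of_ne le_top hW.finite)
      · exact lt_of_le_of_lt (lintegral_mono fun v => pathSup'_le_pathSup hT0 Y v)
          (lt_of_le_of_ne le_top hY.finite)
    have hγcb : cB F (k-1) ≤ ENNReal.ofReal γ :=
      (cB_le_opNorm hFm hop hnn (k-1)).trans hF.iter_le
    have hbnd : ∀ m0 : ℕ, TNorm T (fun u t => piIter X F W (m0+1) u t - Y u t)
        ≤ cB F m0 * ∫⁻ v in Icc (0:ℝ) 1, h'' v := by
      intro m0
      rw [htn (m0+1)]
      refine tnorm_chain hT0 hX hFm hop (memDT_aux hT0 hW) (memDT_aux hT0 hY)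
        hh'' hbd'' m0 ?_
      intro v hv
      exact le_iSup₂ (f := fun w (_ : w ∈ Icc (0:ℝ) 1) =>
        ∫⁻ u in Icc (0:ℝ) 1, KK F m0 u w) v hv
    refine ENNReal.tendsto_atTop_zero.2 fun ε hε => ?_
    have hγ1 : ENNReal.ofReal γ < 1 := by
      rw [← ENNReal.ofReal_one]
      exact (ENNReal.ofReal_lt_ofReal_iff one_pos).2 hF.gamma_mem.2
    have hpow : Tendsto (fun j : ℕ => (ENNReal.ofReal γ)^(j+1) * ∫⁻ v in Icc (0:ℝ) 1, h'' v)
        atTop (nhds 0) := by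
      have h1 : Tendsto (fun j : ℕ => (ENNReal.ofReal γ)^j) atTop (nhds 0) :=
        ENNReal.tendsto_pow_atTop_nhds_zero_of_lt_one hγ1
      have h2 := h1.comp (tendsto_add_atTop_nat 1)
      have h3 := ENNReal.Tendsto.mul_const h2 (Or.inr hMfin.ne)
      simpa using h3
    obtain ⟨J, hJ⟩ := ENNReal.tendsto_atTop_zero.1 hpow ε hε
    refine ⟨J * k + k, fun n hn => ?_⟩
    have hk := hF.k_pos
    obtain ⟨p, hp⟩ : ∃ p, p = J * k := ⟨_, rfl⟩
    rw [← hp] at hn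
    have hn1 : 1 ≤ n := by omega
    obtain ⟨m0, rfl⟩ : ∃ m0, n = m0 + 1 := ⟨n - 1, (Nat.succ_pred_eq_of_pos hn1).symm⟩
    have hle : J * k + (k-1) ≤ m0 := by omega
    calc TNorm T (fun u t => piIter X F W (m0+1) u t - Y u t)
        ≤ cB F m0 * ∫⁻ v in Icc (0:ℝ) 1, h'' v := hbnd m0
      _ ≤ cB F (J * k + (k-1)) * ∫⁻ v in Icc (0:ℝ) 1, h'' v :=
          mul_le_mul_left (cB_antitone hFm hop hle) _
      _ ≤ (ENNReal.ofReal γ)^(J+1) * ∫⁻ v in Icc (0:ℝ) 1, h'' v :=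
          mul_le_mul_left (cB_decay hFm hop hF.k_pos hγcb J) _
      _ ≤ ε := hJ J (le_refl J)

end HelperProofs

/-- contraction estimate for the iterates of `π_{X,F}` and convergence of the
iterates to the regulator `Ψ_F(X)`. -/
theorem piMap_iterates_contract_and_converge
    (T : ℝ) (hT : 0 < T) (X F : ℝ → ℝ → ℝ) (γ : ℝ) (k : ℕ)
    (hX : MemDT T X) (hF : IsReflKernel F γ k) :
    (∀ W1 W2 : ℝ → ℝ → ℝ, MemDT T W1 → MemDT T W2 → ∀ n : ℕ, 1 ≤ n →
      TNorm T (fun u t => piIter X F W1 n u t - piIter X F W2 n u t)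
        ≤ kernelOpNorm (kernelIter F (n - 1))
            * TNorm T (fun u t => W1 u t - W2 u t)) ∧
    (∀ W Y : ℝ → ℝ → ℝ, MemDT T W → IsRegulator T X F Y →
      Filter.Tendsto (fun n : ℕ => TNorm T (fun u t => piIter X F W n u t - Y u t))
        Filter.atTop (nhds 0)) :=
  final_statement T hT X F γ k hX hF
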